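/- Let T ≥ 1 and m = (m_0,…,m_T) ∈ M_T with H̲_T(m) · H̄_T(m) = 0. Then there is exactly one Borel probability measure on [0,1] whose first T+1 raw moments equal m (i.e. D(m) is a singleton); in particular q̲_T(m) = q̄_T(m). -/

import Mathlib

open MeasureTheory

/-- `μ` is a Borel probability measure on `[0,1]` (viewed as a measure on `ℝ` giving no mass
to the complement of `[0,1]`) whose first `T+1` raw moments are `m_0, …, m_T`. -/
def IsMomentSeq (T : ℕ) (μ : Measure ℝ) (m : Fin (T + 1) → ℝ) : Prop :=
  IsProbabilityMeasure μ ∧ μ (Set.Icc (0 : ℝ) 1)ᶜ = 0 ∧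
    ∀ t : Fin (T + 1), m t = ∫ u, u ^ (t : ℕ) ∂μ

/-- The moment space `M_T ⊆ ℝ^{T+1}`: vectors of the first `T+1` raw moments of Borel
probability measures on `[0,1]`. -/
def momSpace (T : ℕ) : Set (Fin (T + 1) → ℝ) :=
  {m | ∃ μ : Measure ℝ, IsMomentSeq T μ m}

/-- `D(m)`: the set of Borel probability measures on `[0,1]` with raw moments `m_0, …, m_T`. -/
def Dset (T : ℕ) (m : Fin (T + 1) → ℝ) : Set (Measure ℝ) :=
  {μ | IsMomentSeq T μ m}

/-- `q̲_T(m) = inf_{μ ∈ D(m)} ∫ u^{T+1} dμ(u)`. -/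
noncomputable def qlow (T : ℕ) (m : Fin (T + 1) → ℝ) : ℝ :=
  sInf ((fun μ : Measure ℝ => ∫ u, u ^ (T + 1) ∂μ) '' Dset T m)

/-- `q̄_T(m) = sup_{μ ∈ D(m)} ∫ u^{T+1} dμ(u)`. -/
noncomputable def qup (T : ℕ) (m : Fin (T + 1) → ℝ) : ℝ :=
  sSup ((fun μ : Measure ℝ => ∫ u, u ^ (T + 1) ∂μ) '' Dset T m)

/-- Extension of a finite vector to `ℕ → ℝ` (junk value `0` outside the range). -/
def toFun {n : ℕ} (m : Fin n → ℝ) : ℕ → ℝ :=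
  fun k => if h : k < n then m ⟨k, h⟩ else 0

/-- The lower Hankel determinant `H̲_t(m)` (with `0`-based indexing of `m`):
for `t` even, `det[(m_{i+j})_{0 ≤ i,j ≤ t/2}]`; for `t` odd,
`det[(m_{i+j+1})_{0 ≤ i,j ≤ (t+1)/2 - 1}]`. -/
noncomputable def Hlow (t : ℕ) (m : ℕ → ℝ) : ℝ :=
  if t % 2 = 0 then
    Matrix.det (Matrix.of fun i j : Fin (t / 2 + 1) => m (i.val + j.val))
  else
    Matrix.det (Matrix.of fun i j : Fin ((t + 1) / 2) => m (i.val + j.val + 1))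

/-- The upper Hankel determinant `H̄_t(m)` (with `0`-based indexing of `m`):
for `t` even, `det[(m_{i+j+1} - m_{i+j+2})_{0 ≤ i,j ≤ t/2 - 1}]`; for `t` odd,
`det[(m_{i+j} - m_{i+j+1})_{0 ≤ i,j ≤ (t+1)/2 - 1}]`. -/
noncomputable def Hup (t : ℕ) (m : ℕ → ℝ) : ℝ :=
  if t % 2 = 0 then
    Matrix.det (Matrix.of fun i j : Fin (t / 2) => m (i.val + j.val + 1) - m (i.val + j.val + 2))
  else
    Matrix.det (Matrix.of fun i j : Fin ((t + 1) / 2) => m (i.val + j.val) - m (i.val + j.val + 1))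

open MeasureTheory Polynomial

lemma ae_mem_Icc01 {ν : Measure ℝ} (h : ν (Set.Icc (0:ℝ) 1)ᶜ = 0) :
    ∀ᵐ u ∂ν, u ∈ Set.Icc (0:ℝ) 1 := by
  rw [MeasureTheory.ae_iff]
  exact h

lemma integrable_pow01 {ν : Measure ℝ} [IsProbabilityMeasure ν]
    (h : ν (Set.Icc (0:ℝ) 1)ᶜ = 0) (t : ℕ) :
    Integrable (fun u : ℝ => u ^ t) ν := by
  refine (integrable_const (1:ℝ)).mono' ((measurable_id.pow_const t).aestronglyMeasurable) ?_
  filter_upwards [ae_mem_Icc01 h] with u hu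
  rw [Real.norm_eq_abs, abs_pow]
  exact pow_le_one₀ (abs_nonneg u) (abs_le.2 ⟨by linarith [hu.1], hu.2⟩)

lemma integrable_eval01 {ν : Measure ℝ} [IsProbabilityMeasure ν]
    (h : ν (Set.Icc (0:ℝ) 1)ᶜ = 0) (p : ℝ[X]) :
    Integrable (fun u : ℝ => p.eval u) ν := by
  have he : (fun u : ℝ => p.eval u)
      = fun u => ∑ i ∈ Finset.range (p.natDegree + 1), p.coeff i * u ^ i := by
    funext u; exact p.eval_eq_sum_range u
  rw [he]
  exact integrable_finset_sum _ fun i _ => (integrable_pow01 h i).const_mul _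

lemma integral_eval_eq {T : ℕ} {m : Fin (T+1) → ℝ} {ν : Measure ℝ}
    (hν : IsMomentSeq T ν m) (p : ℝ[X]) (hp : p.natDegree ≤ T) :
    ∫ u, p.eval u ∂ν = ∑ t ∈ Finset.range (T+1), p.coeff t * toFun m t := by
  obtain ⟨hprob, hc, hmom⟩ := hν
  have he : ∀ u : ℝ, p.eval u = ∑ t ∈ Finset.range (T+1), p.coeff t * u ^ t :=
    fun u => p.eval_eq_sum_range' (lt_of_le_of_lt hp (Nat.lt_succ_self T)) u
  calc ∫ u, p.eval u ∂ν = ∑ t ∈ Finset.range (T+1), ∫ u, p.coeff t * u ^ t ∂ν := by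
        simp_rw [he]
        exact integral_finset_sum _ fun t _ => ((integrable_pow01 hc t).const_mul _)
    _ = ∑ t ∈ Finset.range (T+1), p.coeff t * toFun m t := by
        refine Finset.sum_congr rfl fun t ht => ?_
        rw [integral_const_mul]
        congr 1
        rw [toFun, dif_pos (Finset.mem_range.1 ht)]
        exact (hmom ⟨t, Finset.mem_range.1 ht⟩).symm
lemma key_poly {T : ℕ} {m : Fin (T+1) → ℝ} (n : ℕ)
    (w : ℝ[X]) (hw : w ≠ 0) (hwnn : ∀ u ∈ Set.Icc (0:ℝ) 1, 0 ≤ w.eval u)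
    (hdeg : w.natDegree + 2 * (n - 1) ≤ T)
    (M : Matrix (Fin n) (Fin n) ℝ)
    (hM : ∀ ν ∈ Dset T m, ∀ i j : Fin n, M i j = ∫ u, w.eval u * u ^ (i.val + j.val) ∂ν)
    (hdet : M.det = 0) :
    ∃ f : ℝ[X], f ≠ 0 ∧ f.natDegree ≤ T ∧ (∀ u ∈ Set.Icc (0:ℝ) 1, 0 ≤ f.eval u) ∧
      ∀ ν ∈ Dset T m, ∫ u, f.eval u ∂ν = 0 := by
  classical
  obtain ⟨c, hc0, hc⟩ := Matrix.exists_mulVec_eq_zero_iff.2 hdet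
  set q : ℝ[X] := ∑ i : Fin n, C (c i) * X ^ (i : ℕ) with hq
  obtain ⟨i0, hi0⟩ := Function.ne_iff.1 hc0
  have hqcoeff : ∀ i : Fin n, q.coeff (i : ℕ) = c i := by
    intro i
    rw [hq, Polynomial.finset_sum_coeff, Finset.sum_eq_single i]
    · simp
    · intro j _ hji
      rw [coeff_C_mul, coeff_X_pow, if_neg (fun h => hji (Fin.ext h.symm)), mul_zero]
    · simp
  have hq0 : q ≠ 0 := by
    intro h
    exact hi0 (by rw [← hqcoeff i0, h, coeff_zero]; rfl)
  have hqdeg : q.natDegree ≤ n - 1 := by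
    refine Polynomial.natDegree_sum_le_of_forall_le _ _ fun i _ => ?_
    exact (Polynomial.natDegree_C_mul_X_pow_le _ _).trans (by omega)
  refine ⟨w * q ^ 2, mul_ne_zero hw (pow_ne_zero 2 hq0), ?_, ?_, ?_⟩
  · refine Polynomial.natDegree_mul_le.trans ?_
    rw [Polynomial.natDegree_pow]
    omega
  · intro u hu
    rw [eval_mul, eval_pow]
    exact mul_nonneg (hwnn u hu) (sq_nonneg _)
  · intro ν hν
    obtain ⟨hprob, hcν, -⟩ := id hν
    have hqe : ∀ u : ℝ, q.eval u = ∑ i : Fin n, c i * u ^ (i : ℕ) := by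
      intro u; rw [hq, eval_finset_sum]; simp
    have hfe : ∀ u : ℝ, ((w * q ^ 2).eval u)
        = ∑ i : Fin n, ∑ j : Fin n, c i * c j * (w.eval u * u ^ (i.val + j.val)) := by
      intro u
      rw [eval_mul, eval_pow, hqe, sq, Finset.sum_mul_sum, Finset.mul_sum]
      refine Finset.sum_congr rfl fun i _ => ?_
      rw [Finset.mul_sum]
      refine Finset.sum_congr rfl fun j _ => ?_
      rw [pow_add]; ring
    have hwk : ∀ k : ℕ, Integrable (fun u : ℝ => w.eval u * u ^ k) ν := by
      intro k
      have := integrable_eval01 hcν (w * X ^ k)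
      simpa [eval_mul] using this
    calc ∫ u, (w * q ^ 2).eval u ∂ν
        = ∑ i : Fin n, ∑ j : Fin n, c i * c j * M i j := by
          simp_rw [hfe]
          rw [integral_finset_sum _ fun i _ =>
            integrable_finset_sum _ fun j _ => ((hwk (i.val + j.val)).const_mul _)]
          refine Finset.sum_congr rfl fun i _ => ?_
          rw [integral_finset_sum _ fun j _ => ((hwk (i.val + j.val)).const_mul _)]
          refine Finset.sum_congr rfl fun j _ => ?_
          rw [integral_const_mul, hM ν hν i j]
      _ = 0 := by
          have h1 : ∀ i, ∑ j : Fin n, c i * c j * M i j = c i * (M.mulVec c i) := by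
            intro i
            rw [Matrix.mulVec, dotProduct, Finset.mul_sum]
            exact Finset.sum_congr rfl fun j _ => by ring
          simp [h1, hc]
lemma unique_of_poly {T : ℕ} {m : Fin (T+1) → ℝ} (f : ℝ[X]) (hf0 : f ≠ 0)
    (hfd : f.natDegree ≤ T) (hfnn : ∀ u ∈ Set.Icc (0:ℝ) 1, 0 ≤ f.eval u)
    (hint : ∀ ν ∈ Dset T m, ∫ u, f.eval u ∂ν = 0)
    {μ ν : Measure ℝ} (hμ : μ ∈ Dset T m) (hν : ν ∈ Dset T m) : μ = ν := by
  classical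
  set s : Finset ℝ := f.roots.toFinset with hs
  have hcard : s.card ≤ T := le_trans (Multiset.toFinset_card_le _) (le_trans f.card_roots' hfd)
  have hconc : ∀ ρ ∈ Dset T m, ρ (↑s : Set ℝ)ᶜ = 0 := by
    intro ρ hρ
    obtain ⟨hprob, hcρ, -⟩ := id hρ
    have hae : (fun u : ℝ => f.eval u) =ᵐ[ρ] 0 := by
      refine (integral_eq_zero_iff_of_nonneg_ae ?_ (integrable_eval01 hcρ f)).1 (hint ρ hρ)
      filter_upwards [ae_mem_Icc01 hcρ] with u hu using hfnn u hu
    have h0 : ρ {u : ℝ | f.eval u ≠ 0} = 0 := by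
      rw [Filter.EventuallyEq, ae_iff] at hae; simpa using hae
    refine measure_mono_null ?_ h0
    intro u hu
    simp only [Set.mem_compl_iff, Finset.mem_coe, hs, Multiset.mem_toFinset, mem_roots'] at hu
    simp only [Set.mem_setOf_eq]
    exact fun h => hu ⟨hf0, h⟩
  haveI : IsProbabilityMeasure μ := hμ.1
  haveI : IsProbabilityMeasure ν := hν.1
  have hpoint : ∀ x ∈ s, μ {x} = ν {x} := by
    intro x hx
    set L : ℝ[X] := Lagrange.basis s id x with hL
    have hLdeg : L.natDegree ≤ T := by
      rw [hL, Lagrange.natDegree_basis (Set.injOn_id _) hx]; omega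
    have hLint : ∀ ρ ∈ Dset T m, ∫ u, L.eval u ∂ρ = (ρ {x}).toReal := by
      intro ρ hρ
      have hae : (fun u : ℝ => L.eval u) =ᵐ[ρ] Set.indicator {x} (1 : ℝ → ℝ) := by
        rw [Filter.EventuallyEq, ae_iff]
        refine measure_mono_null ?_ (hconc ρ hρ)
        intro u hu
        simp only [Set.mem_setOf_eq] at hu
        simp only [Set.mem_compl_iff, Finset.mem_coe]
        intro hus
        apply hu
        by_cases hux : u = x
        · subst hux
          rw [Set.indicator_of_mem (Set.mem_singleton u)]
          simpa using Lagrange.eval_basis_self (Set.injOn_id (↑s : Set ℝ)) hx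
        · rw [Set.indicator_of_notMem (by simpa using hux)]
          simpa using Lagrange.eval_basis_of_ne (s := s) (v := (id : ℝ → ℝ)) (i := x) (j := u)
            (fun h => hux h.symm) hus
      rw [integral_congr_ae hae, integral_indicator_one (measurableSet_singleton x)]; rfl
    have hμν : (μ {x}).toReal = (ν {x}).toReal := by
      rw [← hLint μ hμ, ← hLint ν hν, integral_eval_eq hμ L hLdeg,
        integral_eval_eq hν L hLdeg]
    exact (ENNReal.toReal_eq_toReal_iff' (measure_ne_top μ _) (measure_ne_top ν _)).1 hμν
  refine Measure.ext fun A hA => ?_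
  have expand : ∀ ρ ∈ Dset T m, ρ A = ∑ x ∈ s.filter (· ∈ A), ρ {x} := by
    intro ρ hρ
    have hd : ρ (A \ (↑s : Set ℝ)) = 0 :=
      measure_mono_null (fun u hu => hu.2) (hconc ρ hρ)
    have h1 : ρ A = ρ (A ∩ (↑s : Set ℝ)) := by
      refine le_antisymm ?_ (measure_mono Set.inter_subset_left)
      calc ρ A = ρ (A ∩ (↑s : Set ℝ) ∪ A \ (↑s : Set ℝ)) := by rw [Set.inter_union_diff]
        _ ≤ ρ (A ∩ ↑s) + ρ (A \ ↑s) := measure_union_le _ _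
        _ = ρ (A ∩ ↑s) := by rw [hd, add_zero]
    have h2 : (A ∩ (↑s : Set ℝ)) = (↑(s.filter (· ∈ A)) : Set ℝ) := by
      ext u; simp [Finset.mem_filter, and_comm]
    have h3 : ρ (↑(s.filter (· ∈ A)) : Set ℝ) = ∑ x ∈ s.filter (· ∈ A), ρ {x} := by
      rw [show (↑(s.filter (· ∈ A)) : Set ℝ) = ⋃ x ∈ s.filter (· ∈ A), {x} by ext u; simp]
      exact measure_biUnion_finset
        (fun x _ y _ hxy => Set.disjoint_singleton.2 hxy)
        (fun _ _ => measurableSet_singleton _)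
    rw [h1, h2, h3]
  rw [expand μ hμ, expand ν hν]
  exact Finset.sum_congr rfl fun x hx => hpoint x (Finset.mem_filter.1 hx).1
/-- Boundary case of the truncated Hausdorff moment problem: if `m ∈ M_T` and
`H̲_T(m) · H̄_T(m) = 0`, then there is exactly one Borel probability measure on `[0,1]`
with moments `m`, i.e. `D(m)` is a singleton; in particular `q̲_T(m) = q̄_T(m)`. -/
theorem hankel_boundary_unique (T : ℕ) (hT : 1 ≤ T) (m : Fin (T + 1) → ℝ)
    (hm : m ∈ momSpace T) (hzero : Hlow T (toFun m) * Hup T (toFun m) = 0) :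
    (∃! μ : Measure ℝ, μ ∈ Dset T m) ∧ qlow T m = qup T m := by
  classical
  obtain ⟨μ0, hμ0⟩ := hm
  have hμ0' : μ0 ∈ Dset T m := hμ0
  have hmomk : ∀ ν ∈ Dset T m, ∀ k, k ≤ T → toFun m k = ∫ u, u ^ k ∂ν := by
    intro ν hν k hk
    rw [toFun]
    rw [dif_pos (Nat.lt_succ_of_le hk)]
    exact hν.2.2 ⟨k, Nat.lt_succ_of_le hk⟩
  have hintpow : ∀ ν ∈ Dset T m, ∀ k : ℕ, Integrable (fun u : ℝ => u ^ k) ν := by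
    intro ν hν k
    haveI := hν.1
    exact integrable_pow01 hν.2.1 k
  have hf : ∃ f : ℝ[X], f ≠ 0 ∧ f.natDegree ≤ T ∧ (∀ u ∈ Set.Icc (0:ℝ) 1, 0 ≤ f.eval u) ∧
      ∀ ν ∈ Dset T m, ∫ u, f.eval u ∂ν = 0 := by
    rcases Nat.even_or_odd T with hpar | hpar
    · have h2 : T % 2 = 0 := Nat.even_iff.1 hpar
      rw [Hlow, Hup, if_pos h2, if_pos h2] at hzero
      rcases mul_eq_zero.1 hzero with h | h
      · refine key_poly (T / 2 + 1) 1 one_ne_zero (fun u _ => by simp) ?_ _ ?_ h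
        · rw [Polynomial.natDegree_one]; omega
        · intro ν hν i j
          have hij : i.val + j.val ≤ T := by omega
          rw [Matrix.of_apply, hmomk ν hν _ hij]
          simp
      · refine key_poly (T / 2) (X - X ^ 2) ?_ ?_ ?_ _ ?_ h
        · intro hcontra
          have := congrArg (Polynomial.eval (1/2 : ℝ)) hcontra
          simp only [eval_sub, eval_pow, eval_X, eval_zero] at this
          norm_num at this
        · intro u hu
          simp only [eval_sub, eval_pow, eval_X]
          nlinarith [hu.1, hu.2]
        · have hd : (X - X ^ 2 : ℝ[X]).natDegree ≤ 2 := by compute_degree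
          omega
        · intro ν hν i j
          haveI := hν.1
          have h1 : i.val + j.val + 1 ≤ T := by omega
          have h2' : i.val + j.val + 2 ≤ T := by omega
          rw [Matrix.of_apply, hmomk ν hν _ h1, hmomk ν hν _ h2',
            ← integral_sub (hintpow ν hν _) (hintpow ν hν _)]
          refine integral_congr_ae (Filter.Eventually.of_forall fun u => ?_)
          simp only [eval_sub, eval_pow, eval_X]
          ring
    · have h2 : ¬ (T % 2 = 0) := by
        have := Nat.odd_iff.1 hpar; omega
      rw [Hlow, Hup, if_neg h2, if_neg h2] at hzero
      have h2' : T % 2 = 1 := Nat.odd_iff.1 hpar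
      rcases mul_eq_zero.1 hzero with h | h
      · refine key_poly ((T + 1) / 2) X X_ne_zero (fun u hu => by simpa using hu.1) ?_ _ ?_ h
        · rw [Polynomial.natDegree_X]; omega
        · intro ν hν i j
          have h1 : i.val + j.val + 1 ≤ T := by omega
          rw [Matrix.of_apply, hmomk ν hν _ h1]
          refine integral_congr_ae (Filter.Eventually.of_forall fun u => ?_)
          simp only [eval_X]
          ring
      · refine key_poly ((T + 1) / 2) (1 - X) ?_ ?_ ?_ _ ?_ h
        · intro hcontra
          have := congrArg (Polynomial.eval (0 : ℝ)) hcontra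
          simp at this
        · intro u hu
          simp only [eval_sub, eval_one, eval_X]
          linarith [hu.2]
        · have hd : (1 - X : ℝ[X]).natDegree ≤ 1 := by compute_degree
          omega
        · intro ν hν i j
          haveI := hν.1
          have h1 : i.val + j.val ≤ T := by omega
          have h1' : i.val + j.val + 1 ≤ T := by omega
          rw [Matrix.of_apply, hmomk ν hν _ h1, hmomk ν hν _ h1',
            ← integral_sub (hintpow ν hν _) (hintpow ν hν _)]
          refine integral_congr_ae (Filter.Eventually.of_forall fun u => ?_)
          simp only [eval_sub, eval_one, eval_X]
          ring
  obtain ⟨f, hf0, hfd, hfnn, hfint⟩ := hf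
  have huniq : ∀ ν ∈ Dset T m, ν = μ0 := fun ν hν =>
    unique_of_poly f hf0 hfd hfnn hfint hν hμ0'
  have hDs : Dset T m = {μ0} := Set.eq_singleton_iff_unique_mem.2 ⟨hμ0', huniq⟩
  refine ⟨⟨μ0, hμ0', fun ν hν => huniq ν hν⟩, ?_⟩
  rw [qlow, qup, hDs, Set.image_singleton, csInf_singleton, csSup_singleton]
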